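/- Let Ω = C(ℝ₊, ℝ^d) be the canonical space with Borel σ-field 𝓕, P a probability measure on (Ω, 𝓕), G ⊆ 𝓕 a sub-σ-algebra, and (P_ω)_{ω∈Ω} a regular conditional probability of P given G. Let ζ be a P-integrable random variable measurable with respect to 𝓕^P := 𝓕 ∨ N^P. Then for P-almost every ω ∈ Ω, ζ is measurable with respect to 𝓕^{P_ω} := 𝓕 ∨ N^{P_ω}, and the conditional expectation satisfies E^P[ζ | G ∨ N^P](ω) = ∫_Ω ζ(ω′) P_ω(dω′) for P-almost every ω. -/

import Mathlib

open MeasureTheory ProbabilityTheory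
open scoped NNReal

noncomputable section

/-- The canonical space `Ω = C(ℝ₊, ℝ^d)` of continuous paths. -/
abbrev CanonSp (d : ℕ) := C(ℝ≥0, EuclideanSpace ℝ (Fin d))

/-- The Borel σ-field `𝓕` of the canonical space. -/
instance (d : ℕ) : MeasurableSpace (CanonSp d) := borel _
instance (d : ℕ) : BorelSpace (CanonSp d) := ⟨rfl⟩

/-- The Borel σ-field of the canonical space, named for explicit use. -/
abbrev canonBorel (d : ℕ) : MeasurableSpace (CanonSp d) := inferInstance

/-- The canonical (raw) filtration `F_s = σ(B_u, u ≤ s)` on the canonical space. -/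
def canonFil (d : ℕ) : Filtration ℝ≥0 (canonBorel d) where
  seq s := ⨆ u ∈ Set.Iic s, MeasurableSpace.comap (fun ω : CanonSp d => ω u) inferInstance
  mono' := fun s t hst => biSup_mono fun u (hu : u ≤ s) => hu.trans hst
  le' := fun _s => iSup₂_le fun u _ =>
    Measurable.comap_le (ContinuousEvalConst.continuous_eval_const u).measurable

/-- The σ-algebra generated by the collection `N^P` of `P`-negligible sets. -/
def nullSigma {α : Type*} {m : MeasurableSpace α} (P : @Measure α m) : MeasurableSpace α :=
  MeasurableSpace.generateFrom {A | ∃ N, MeasurableSet[m] N ∧ P N = 0 ∧ A ⊆ N}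

/-- `(P_w)_{w}` is a regular conditional probability of `P` given the
sub-σ-algebra `G` : each `P_w` is a probability measure, `w ↦ P_w(A)` is
`G`-measurable for each measurable `A`, and `P(A ∩ B) = ∫_B P_w(A) P(dw)`
for all measurable `A` and all `B ∈ G`. -/
def IsRCP {α : Type*} {m : MeasurableSpace α} (P : @Measure α m)
    (G : MeasurableSpace α) (Pw : α → @Measure α m) : Prop :=
  (∀ w, IsProbabilityMeasure (Pw w)) ∧
  (∀ A : Set α, MeasurableSet[m] A → Measurable[G] fun w => Pw w A) ∧
  (∀ A : Set α, MeasurableSet[m] A → ∀ B : Set α, MeasurableSet[G] B →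
    P (A ∩ B) = ∫⁻ w in B, Pw w A ∂P)

open scoped ENNReal

section Aux

variable {α : Type*} [m0 : MeasurableSpace α]

lemma measurable_sup_nullSigma (P : Measure α) {m : MeasurableSpace α} {f g : α → ℝ}
    (hg : Measurable[m] g) {N : Set α} (hN : MeasurableSet[m0] N) (hPN : P N = 0)
    (hfg : ∀ x, x ∉ N → f x = g x) :
    Measurable[m ⊔ nullSigma P] f := by
  intro s hs
  have hNnull : MeasurableSet[nullSigma P] N :=
    MeasurableSpace.measurableSet_generateFrom ⟨N, hN, hPN, subset_rfl⟩
  have hsub : MeasurableSet[nullSigma P] (f ⁻¹' s ∩ N) :=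
    MeasurableSpace.measurableSet_generateFrom ⟨N, hN, hPN, Set.inter_subset_right⟩
  have heq : f ⁻¹' s = (g ⁻¹' s \ N) ∪ (f ⁻¹' s ∩ N) := by
    ext x
    by_cases hx : x ∈ N
    · simp [hx]
    · simp [hx, Set.mem_preimage, hfg x hx]
  rw [heq]
  exact MeasurableSet.union
    (MeasurableSet.diff ((le_sup_left : m ≤ m ⊔ nullSigma P) _ (hg hs))
      ((le_sup_right : nullSigma P ≤ m ⊔ nullSigma P) _ hNnull))
    ((le_sup_right : nullSigma P ≤ m ⊔ nullSigma P) _ hsub)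

lemma exists_approx (P : Measure α) {G : MeasurableSpace α} {B : Set α}
    (hB : MeasurableSet[G ⊔ nullSigma P] B) :
    ∃ B', MeasurableSet[G] B' ∧ ∃ N, MeasurableSet[m0] N ∧ P N = 0 ∧
      ∀ x, x ∉ N → (x ∈ B ↔ x ∈ B') := by
  let m' : MeasurableSpace α :=
  { MeasurableSet' := fun B => ∃ B', MeasurableSet[G] B' ∧ ∃ N, MeasurableSet[m0] N ∧ P N = 0 ∧
      ∀ x, x ∉ N → (x ∈ B ↔ x ∈ B')
    measurableSet_empty := ⟨∅, @MeasurableSet.empty _ G, ∅, @MeasurableSet.empty _ m0, measure_empty, by simp⟩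
    measurableSet_compl := by
      rintro B ⟨B', hB', N, hN, hPN, h⟩
      exact ⟨B'ᶜ, hB'.compl, N, hN, hPN, fun x hx => by simp [h x hx]⟩
    measurableSet_iUnion := by
      intro f hf
      choose B' hB' N hN hPN h using hf
      refine ⟨⋃ i, B' i, @MeasurableSet.iUnion _ _ G _ _ hB', ⋃ i, N i, MeasurableSet.iUnion hN,
        measure_iUnion_null hPN, fun x hx => ?_⟩
      simp only [Set.mem_iUnion] at hx ⊢
      push_neg at hx
      exact exists_congr fun i => h i x (hx i) }
  have hle : G ⊔ nullSigma P ≤ m' := by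
    refine sup_le ?_ ?_
    · intro s hs; exact ⟨s, hs, ∅, @MeasurableSet.empty _ m0, measure_empty, by simp⟩
    · refine MeasurableSpace.generateFrom_le ?_
      rintro A ⟨N, hN, hPN, hAN⟩
      exact ⟨∅, @MeasurableSet.empty _ G, N, hN, hPN, fun x hx => by
        simp only [Set.mem_empty_iff_false, iff_false]
        exact fun hxA => hx (hAN hxA)⟩
  exact hle B hB

lemma rcp_lintegral (P : Measure α) [IsProbabilityMeasure P] {G : MeasurableSpace α}
    (hG : G ≤ m0) {Pw : α → @Measure α m0} (hPw : IsRCP P G Pw)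
    {φ : α → ℝ≥0∞} (hφ : Measurable[m0] φ) {B : Set α} (hB : MeasurableSet[G] B) :
    ∫⁻ w in B, (∫⁻ x, φ x ∂(Pw w)) ∂P = ∫⁻ x in B, φ x ∂P := by
  have hmeas : @Measurable α (@Measure α m0) G (@Measure.instMeasurableSpace α m0) Pw :=
    @Measure.measurable_of_measurable_coe α α m0 G Pw (fun s hs => hPw.2.1 s hs)
  have hbind : @Measure.restrict α m0 P B = @Measure.bind α α G m0 ((P.trim hG).restrict B) Pw := by
    refine @Measure.ext α m0 _ _ fun A hA => ?_
    rw [@Measure.bind_apply α α G m0 ((P.trim hG).restrict B) Pw A hA hmeas.aemeasurable]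
    rw [restrict_trim hG P hB]
    rw [lintegral_trim hG (hPw.2.1 A hA)]
    rw [Measure.restrict_apply hA]
    rw [hPw.2.2 A hA B hB]
  have hlm : @Measurable α ℝ≥0∞ G _ (fun w => ∫⁻ x, φ x ∂(Pw w)) :=
    Measurable.comp (@Measure.measurable_lintegral α m0 φ hφ) hmeas
  calc ∫⁻ w in B, (∫⁻ x, φ x ∂(Pw w)) ∂P
      = ∫⁻ w, (∫⁻ x, φ x ∂(Pw w)) ∂((P.restrict B).trim hG) :=
        (lintegral_trim hG hlm).symm
    _ = ∫⁻ w, (∫⁻ x, φ x ∂(Pw w)) ∂((P.trim hG).restrict B) := by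
        rw [restrict_trim hG P hB]
    _ = ∫⁻ x, φ x ∂(@Measure.bind α α G m0 ((P.trim hG).restrict B) Pw) :=
        (@Measure.lintegral_bind α α G m0 ((P.trim hG).restrict B) Pw φ hmeas.aemeasurable hφ.aemeasurable).symm
    _ = ∫⁻ x in B, φ x ∂P := by rw [← hbind]

end Aux

section Aux2

variable {α : Type*} [m0 : MeasurableSpace α]

lemma rcp_integral (P : Measure α) [IsProbabilityMeasure P] {G : MeasurableSpace α}
    (hG : G ≤ m0) {Pw : α → @Measure α m0} (hPw : IsRCP P G Pw)
    {ζ : α → ℝ} (hζm : Measurable[m0] ζ) (hζint : Integrable ζ P)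
    {B : Set α} (hB : MeasurableSet[G] B) :
    ∫ w in B, ((∫⁻ x, ENNReal.ofReal (ζ x) ∂(Pw w)).toReal
        - (∫⁻ x, ENNReal.ofReal (-ζ x) ∂(Pw w)).toReal) ∂P = ∫ x in B, ζ x ∂P := by
  have hφpm : Measurable[m0] (fun x => ENNReal.ofReal (ζ x)) := hζm.ennreal_ofReal
  have hφnm : Measurable[m0] (fun x => ENNReal.ofReal (-ζ x)) := hζm.neg.ennreal_ofReal
  have hmeas : @Measurable α (@Measure α m0) G (@Measure.instMeasurableSpace α m0) Pw :=
    @Measure.measurable_of_measurable_coe α α m0 G Pw (fun s hs => hPw.2.1 s hs)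
  have hgp : Measurable[m0] (fun w => ∫⁻ x, ENNReal.ofReal (ζ x) ∂(Pw w)) :=
    (Measurable.comp (@Measure.measurable_lintegral α m0 _ hφpm) hmeas).mono hG le_rfl
  have hgn : Measurable[m0] (fun w => ∫⁻ x, ENNReal.ofReal (-ζ x) ∂(Pw w)) :=
    (Measurable.comp (@Measure.measurable_lintegral α m0 _ hφnm) hmeas).mono hG le_rfl
  have hnormfin : ∫⁻ x, ‖ζ x‖₊ ∂P ≠ ∞ := ((hasFiniteIntegral_def ζ P).mp hζint.2).ne
  have hfp : ∫⁻ w in B, (∫⁻ x, ENNReal.ofReal (ζ x) ∂(Pw w)) ∂P ≠ ∞ := by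
    rw [rcp_lintegral (m0 := m0) P hG hPw hφpm hB]
    refine ne_of_lt (lt_of_le_of_lt ?_ hnormfin.lt_top)
    refine le_trans (lintegral_mono' Measure.restrict_le_self le_rfl) ?_
    exact lintegral_mono fun x => Real.ofReal_le_enorm (ζ x)
  have hfn : ∫⁻ w in B, (∫⁻ x, ENNReal.ofReal (-ζ x) ∂(Pw w)) ∂P ≠ ∞ := by
    rw [rcp_lintegral (m0 := m0) P hG hPw hφnm hB]
    refine ne_of_lt (lt_of_le_of_lt ?_ hnormfin.lt_top)
    refine le_trans (lintegral_mono' Measure.restrict_le_self le_rfl) ?_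
    refine lintegral_mono fun x => le_trans (Real.ofReal_le_enorm (-ζ x)) ?_
    simp
  have hintp : Integrable (fun w => (∫⁻ x, ENNReal.ofReal (ζ x) ∂(Pw w)).toReal)
      (P.restrict B) :=
    integrable_toReal_of_lintegral_ne_top hgp.aemeasurable.restrict hfp
  have hintn : Integrable (fun w => (∫⁻ x, ENNReal.ofReal (-ζ x) ∂(Pw w)).toReal)
      (P.restrict B) :=
    integrable_toReal_of_lintegral_ne_top hgn.aemeasurable.restrict hfn
  have heqp : ∫ w in B, (∫⁻ x, ENNReal.ofReal (ζ x) ∂(Pw w)).toReal ∂P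
      = (∫⁻ x in B, ENNReal.ofReal (ζ x) ∂P).toReal := by
    rw [integral_toReal hgp.aemeasurable.restrict (ae_lt_top' hgp.aemeasurable.restrict hfp),
      rcp_lintegral (m0 := m0) P hG hPw hφpm hB]
  have heqn : ∫ w in B, (∫⁻ x, ENNReal.ofReal (-ζ x) ∂(Pw w)).toReal ∂P
      = (∫⁻ x in B, ENNReal.ofReal (-ζ x) ∂P).toReal := by
    rw [integral_toReal hgn.aemeasurable.restrict (ae_lt_top' hgn.aemeasurable.restrict hfn),
      rcp_lintegral (m0 := m0) P hG hPw hφnm hB]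
  rw [integral_sub hintp hintn, heqp, heqn,
    integral_eq_lintegral_pos_part_sub_lintegral_neg_part (hζint.restrict)]

end Aux2

/-- On the canonical space, let `(P_ω)` be an r.c.p. of `P` given a
sub-σ-algebra `G ⊆ 𝓕`, and let `ζ` be a `P`-integrable, `𝓕^P := 𝓕 ∨ N^P`-measurable
real random variable. Then for `P`-a.e. `ω`, `ζ` is `𝓕^{P_ω} := 𝓕 ∨ N^{P_ω}`-measurable,
and `ω ↦ ∫ ζ dP_ω` is a version of the conditional expectation `E^P[ζ | G ∨ N^P]`,
i.e. it is `G ∨ N^P`-measurable and has the same `P`-integral as `ζ` on every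
`B ∈ G ∨ N^P`. -/
theorem rcp_condexp {d : ℕ} (P : Measure (CanonSp d))
    [IsProbabilityMeasure P] (Pw : CanonSp d → Measure (CanonSp d))
    (ζ : CanonSp d → ℝ) (hζint : Integrable ζ P)
    (G : MeasurableSpace (CanonSp d)) (hG : G ≤ canonBorel d)
    (hPw : IsRCP P G Pw)
    (hζ : Measurable[canonBorel d ⊔ nullSigma P] ζ) :
    (∀ᵐ w ∂P, Measurable[canonBorel d ⊔ nullSigma (Pw w)] ζ) ∧
    Measurable[G ⊔ nullSigma P] (fun w => ∫ ω', ζ ω' ∂(Pw w)) ∧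
    (∀ B : Set (CanonSp d), MeasurableSet[G ⊔ nullSigma P] B →
      ∫ w in B, (∫ ω', ζ ω' ∂(Pw w)) ∂P = ∫ w in B, ζ w ∂P) := by
  letI m0 : MeasurableSpace (CanonSp d) := canonBorel d
  -- a Borel measurable a.e. version ζ'
  have hnm : NullMeasurable ζ P := by
    have hle : canonBorel d ⊔ nullSigma P ≤
        ({ MeasurableSet' := fun s => NullMeasurableSet s P
           measurableSet_empty := MeasurableSet.empty.nullMeasurableSet
           measurableSet_compl := fun s hs => hs.compl
           measurableSet_iUnion := fun f hf => NullMeasurableSet.iUnion hf } :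
          MeasurableSpace (CanonSp d)) := by
      refine sup_le (fun s hs => hs.nullMeasurableSet) (MeasurableSpace.generateFrom_le ?_)
      rintro A ⟨N, hN, hPN, hAN⟩
      exact NullMeasurableSet.of_null (measure_mono_null hAN hPN)
    exact fun s hs => hle _ (hζ hs)
  have hAEM : AEMeasurable ζ P := hnm.aemeasurable
  set ζ' : CanonSp d → ℝ := hAEM.mk ζ with hζ'def
  have hζ'm : Measurable ζ' := hAEM.measurable_mk
  have hae : ζ =ᵐ[P] ζ' := hAEM.ae_eq_mk
  have hζ'int : Integrable ζ' P := hζint.congr hae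
  set N : Set (CanonSp d) := toMeasurable P {x | ζ x ≠ ζ' x} with hNdef
  have hNm : MeasurableSet N := measurableSet_toMeasurable P _
  have hPN : P N = 0 := by
    rw [hNdef, measure_toMeasurable]
    exact hae
  have hsubN : {x | ζ x ≠ ζ' x} ⊆ N := subset_toMeasurable P _
  have hout : ∀ x, x ∉ N → ζ x = ζ' x := fun x hx =>
    not_not.mp fun h => hx (hsubN h)
  have hmeas : @Measurable (CanonSp d) (Measure (CanonSp d)) G _ Pw :=
    @Measure.measurable_of_measurable_coe _ _ (canonBorel d) G Pw
      (fun s hs => hPw.2.1 s hs)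
  -- a.e. w, Pw w N = 0
  have hPwN0 : ∀ᵐ w ∂P, Pw w N = 0 := by
    have h0 : ∫⁻ w, Pw w N ∂P = 0 := by
      have := hPw.2.2 N hNm Set.univ MeasurableSet.univ
      simp only [Set.inter_univ, Measure.restrict_univ] at this
      rw [← this, hPN]
    have hzero := (lintegral_eq_zero_iff ((hPw.2.1 N hNm).mono hG le_rfl)).mp h0
    exact hzero.mono fun w hw => hw
  -- a.e. w, ζ' is integrable w.r.t. Pw w
  have hfin : ∀ᵐ w ∂P, (∫⁻ x, ‖ζ' x‖₊ ∂(Pw w)) < ∞ := by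
    refine ae_lt_top' (((Measure.measurable_lintegral hζ'm.enorm).comp
      hmeas).mono hG le_rfl).aemeasurable ?_
    have h := rcp_lintegral (m0 := canonBorel d) P hG hPw hζ'm.enorm
      (@MeasurableSet.univ _ G)
    simp only [Measure.restrict_univ] at h
    refine ne_of_eq_of_ne h ?_
    exact ((hasFiniteIntegral_def ζ' P).mp hζ'int.2).ne
  have hintPw : ∀ᵐ w ∂P, Integrable ζ' (Pw w) := by
    refine hfin.mono fun w hw => ⟨hζ'm.aestronglyMeasurable, ?_⟩
    exact (hasFiniteIntegral_def ζ' (Pw w)).mpr hw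
  -- the G-measurable candidate for the conditional expectation
  set F : CanonSp d → ℝ := fun w => (∫⁻ x, ENNReal.ofReal (ζ' x) ∂(Pw w)).toReal
      - (∫⁻ x, ENNReal.ofReal (-ζ' x) ∂(Pw w)).toReal with hFdef
  have hFG : Measurable[G] F := by
    refine Measurable.sub ?_ ?_
    · exact ((Measure.measurable_lintegral hζ'm.ennreal_ofReal).comp hmeas).ennreal_toReal
    · exact ((Measure.measurable_lintegral hζ'm.neg.ennreal_ofReal).comp hmeas).ennreal_toReal
  have haeF : ∀ᵐ w ∂P, (∫ ω', ζ ω' ∂(Pw w)) = F w := by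
    filter_upwards [hPwN0, hintPw] with w h1 h2
    have haew : ζ =ᵐ[Pw w] ζ' := measure_mono_null hsubN h1
    rw [integral_congr_ae haew,
      integral_eq_lintegral_pos_part_sub_lintegral_neg_part h2]
  set M : Set (CanonSp d) := toMeasurable P {w | (∫ ω', ζ ω' ∂(Pw w)) ≠ F w} with hMdef
  have hMm : MeasurableSet M := measurableSet_toMeasurable P _
  have hPM : P M = 0 := by
    rw [hMdef, measure_toMeasurable]
    exact haeF
  have hsubM : {w | (∫ ω', ζ ω' ∂(Pw w)) ≠ F w} ⊆ M := subset_toMeasurable P _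
  have houtM : ∀ w, w ∉ M → (∫ ω', ζ ω' ∂(Pw w)) = F w := fun w hw =>
    not_not.mp fun h => hw (hsubM h)
  refine ⟨?_, ?_, ?_⟩
  · exact hPwN0.mono fun w hw =>
      measurable_sup_nullSigma (Pw w) hζ'm hNm hw hout
  · exact measurable_sup_nullSigma P hFG hMm hPM houtM
  · intro B hB
    obtain ⟨B', hB', NB, hNB, hPNB, hiff⟩ := exists_approx P hB
    have haeB : B =ᵐ[P] B' := by
      rw [Filter.eventuallyEq_set, ae_iff]
      refine measure_mono_null ?_ hPNB
      intro x hx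
      by_contra hxN
      exact hx (hiff x hxN)
    rw [Measure.restrict_congr_set haeB]
    calc ∫ w in B', (∫ ω', ζ ω' ∂(Pw w)) ∂P
        = ∫ w in B', F w ∂P := integral_congr_ae (ae_restrict_of_ae haeF)
      _ = ∫ x in B', ζ' x ∂P :=
          rcp_integral (m0 := canonBorel d) P hG hPw hζ'm hζ'int hB'
      _ = ∫ x in B', ζ x ∂P := integral_congr_ae (ae_restrict_of_ae hae.symm)
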